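/- arXiv:0909.0882 — 5 statements merged into one kernel-verified Lean document; each statement's English description precedes it below -/
import Mathlib

section
/- If f : X → X is a continuous map on a compact metric space and I is a compact set, then Inv(I) equals the intersection over m ≥ 0 of the sets Inv^m(I) = {x : there is an orbit segment (xᵢ)_{i=-m}^{m} with x₀ = x and xᵢ ∈ I for all |i| ≤ m}. -/
open Set

/-- A full (bi-infinite) orbit of `f`. -/
def IsOrbit {X : Type*} (f : X → X) (x : ℤ → X) : Prop := ∀ i, f (x i) = x (i + 1)

/-- The maximal invariant subset of `I`. -/
def InvSet {X : Type*} (f : X → X) (I : Set X) : Set X :=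
  {p | ∃ x : ℤ → X, IsOrbit f x ∧ x 0 = p ∧ ∀ i, x i ∈ I}

/-- `Inv^m I`: points admitting an orbit segment `(x_i)_{i=-m}^m` in `I` with `x_0 = x`. -/
def InvM {X : Type*} (f : X → X) (I : Set X) (m : ℕ) : Set X :=
  {p | ∃ x : ℤ → X, x 0 = p ∧ (∀ i : ℤ, -(m : ℤ) ≤ i → i < (m : ℤ) → f (x i) = x (i + 1)) ∧
    ∀ i : ℤ, |i| ≤ (m : ℤ) → x i ∈ I}

theorem stmt1 {X : Type*} [MetricSpace X] [CompactSpace X] {f : X → X}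
    (hf : Continuous f) {I : Set X} (hI : IsCompact I) :
    InvSet f I = ⋂ m : ℕ, InvM f I m := by
  ext p
  simp only [mem_iInter]
  constructor
  · rintro ⟨x, hx, hx0, hxI⟩ m
    exact ⟨x, hx0, fun i _ _ => hx i, fun i _ => hxI i⟩
  · intro hp
    set C : ℕ → Set (ℤ → X) := fun m =>
      {x | x 0 = p ∧ (∀ i : ℤ, -(m : ℤ) ≤ i → i < (m : ℤ) → f (x i) = x (i + 1)) ∧
        ∀ i : ℤ, |i| ≤ (m : ℤ) → x i ∈ I} with hC
    have hclosed : ∀ m, IsClosed (C m) := by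
      intro m
      have h1 : IsClosed {x : ℤ → X | x 0 = p} :=
        isClosed_eq (continuous_apply 0) continuous_const
      have h2 : IsClosed {x : ℤ → X | ∀ i : ℤ, -(m : ℤ) ≤ i → i < (m : ℤ) →
          f (x i) = x (i + 1)} := by
        have : {x : ℤ → X | ∀ i : ℤ, -(m : ℤ) ≤ i → i < (m : ℤ) → f (x i) = x (i + 1)} =
            ⋂ i : ℤ, {x : ℤ → X | -(m : ℤ) ≤ i → i < (m : ℤ) → f (x i) = x (i + 1)} := by
          ext x; simp
        rw [this]
        refine isClosed_iInter fun i => ?_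
        by_cases h : -(m : ℤ) ≤ i ∧ i < (m : ℤ)
        · have : {x : ℤ → X | -(m : ℤ) ≤ i → i < (m : ℤ) → f (x i) = x (i + 1)} =
              {x : ℤ → X | f (x i) = x (i + 1)} := by
            ext x; simp [h.1, h.2]
          rw [this]
          exact isClosed_eq (hf.comp (continuous_apply i)) (continuous_apply (i + 1))
        · have : {x : ℤ → X | -(m : ℤ) ≤ i → i < (m : ℤ) → f (x i) = x (i + 1)} = univ := by
            ext x; simp only [mem_setOf_eq, mem_univ, iff_true]
            intro h1 h2; exact absurd ⟨h1, h2⟩ h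
          rw [this]; exact isClosed_univ
      have h3 : IsClosed {x : ℤ → X | ∀ i : ℤ, |i| ≤ (m : ℤ) → x i ∈ I} := by
        have : {x : ℤ → X | ∀ i : ℤ, |i| ≤ (m : ℤ) → x i ∈ I} =
            ⋂ i : ℤ, {x : ℤ → X | |i| ≤ (m : ℤ) → x i ∈ I} := by ext x; simp
        rw [this]
        refine isClosed_iInter fun i => ?_
        by_cases h : |i| ≤ (m : ℤ)
        · have : {x : ℤ → X | |i| ≤ (m : ℤ) → x i ∈ I} = (fun x : ℤ → X => x i) ⁻¹' I := by
            ext x; simp [h]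
          rw [this]
          exact hI.isClosed.preimage (continuous_apply i)
        · have : {x : ℤ → X | |i| ≤ (m : ℤ) → x i ∈ I} = univ := by
            ext x; simp only [mem_setOf_eq, mem_univ, iff_true]
            intro h1; exact absurd h1 h
          rw [this]; exact isClosed_univ
      have : C m = {x : ℤ → X | x 0 = p} ∩
          ({x : ℤ → X | ∀ i : ℤ, -(m : ℤ) ≤ i → i < (m : ℤ) → f (x i) = x (i + 1)} ∩
           {x : ℤ → X | ∀ i : ℤ, |i| ≤ (m : ℤ) → x i ∈ I}) := by
        ext x; simp [hC, and_assoc]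
      rw [this]
      exact h1.inter (h2.inter h3)
    have hne : ∀ m, (C m).Nonempty := by
      intro m
      obtain ⟨x, hx0, hseg, hI'⟩ := hp m
      exact ⟨x, hx0, hseg, hI'⟩
    have hdec : ∀ m, C (m + 1) ⊆ C m := by
      intro m x ⟨hx0, hseg, hI'⟩
      refine ⟨hx0, fun i h1 h2 => hseg i (by push_cast; omega) (by push_cast; omega),
        fun i h1 => hI' i (by push_cast; omega)⟩
    obtain ⟨x, hx⟩ := IsCompact.nonempty_iInter_of_sequence_nonempty_isCompact_isClosed
      C hdec hne ((hclosed 0).isCompact) hclosed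
    simp only [mem_iInter] at hx
    refine ⟨x, ?_, (hx 0).1, ?_⟩
    · intro i
      obtain ⟨_, hseg, _⟩ := hx (i.natAbs + 1)
      exact hseg i (by omega) (by omega)
    · intro i
      obtain ⟨_, _, hI'⟩ := hx i.natAbs
      exact hI' i (by rw [Int.abs_eq_natAbs])
end

section
/- Let f : X → X be a homeomorphism of a compact metric space. If the diagonal 1_X = {(x,x) : x ∈ X} is an isolated invariant set for f × f : X × X → X × X, then f is expansive in the metric sense: there exists ρ > 0 such that for all distinct x, y ∈ X there is n ∈ ℤ with d(fⁿ(x), fⁿ(y)) > ρ. -/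
open Set

/-- The diagonal of `X × X`. -/
def diagSet (X : Type*) : Set (X × X) := {p : X × X | p.1 = p.2}

theorem stmt4 {X : Type*} [MetricSpace X] [CompactSpace X] (f : X ≃ₜ X)
    (h : ∃ I : Set (X × X), IsCompact I ∧
      InvSet (Prod.map f f) I = diagSet X ∧ diagSet X ⊆ interior I) :
    ∃ ρ > 0, ∀ x y : X, x ≠ y →
      ∃ n : ℤ, ρ < dist ((f.toEquiv ^ n) x) ((f.toEquiv ^ n) y) := by
  obtain ⟨I, -, hInv, hdiag⟩ := h
  -- interior I is a neighborhood of the diagonal, hence a uniformity entourage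
  have hmem : interior I ∈ uniformity X := by
    rw [← nhdsSet_diagonal_eq_uniformity]
    exact isOpen_interior.mem_nhdsSet.mpr (fun p hp => hdiag hp)
  obtain ⟨ε, hε, hU⟩ := Metric.mem_uniformity_dist.mp hmem
  refine ⟨ε / 2, by linarith, fun x y hxy => ?_⟩
  by_contra hc
  push_neg at hc
  apply hxy
  have hmemI : (x, y) ∈ InvSet (Prod.map f f) I := by
    refine ⟨fun n => ((f.toEquiv ^ n) x, (f.toEquiv ^ n) y), ?_, ?_, ?_⟩
    · intro i
      have hp : f.toEquiv ^ (i + 1) = f.toEquiv * f.toEquiv ^ i := by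
        rw [add_comm, zpow_add, zpow_one]
      simp [Prod.map, hp]
    · simp
    · intro i
      apply interior_subset
      apply hU
      calc dist ((f.toEquiv ^ i) x) ((f.toEquiv ^ i) y) ≤ ε / 2 := hc i
        _ < ε := by linarith
  rw [hInv] at hmemI
  exact hmemI
end

section
/- Let f : X → X be continuous on a compact metric space and let 𝒫 = {(N_a, L_a) : a ∈ 𝒜} be an index system. Then the invariant set Inv(𝒫), defined as the union over all bi-infinite allowable sequences (aᵢ) of the sets of points whose orbit follows (cl(N_{aᵢ} \ L_{aᵢ})), is a compact set satisfying f(Inv 𝒫) = Inv 𝒫. -/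
open Set

/-- An index system for `f : X → X`, indexed by a (finite) symbol set `A`. -/
structure IndexSystem (X : Type*) [TopologicalSpace X] (f : X → X) (A : Type*) where
  N : A → Set X
  L : A → Set X
  compactN : ∀ a, IsCompact (N a)
  compactL : ∀ a, IsCompact (L a)
  subset : ∀ a, L a ⊆ N a
  precedes : A → A → Prop
  /-- If `a` precedes `b`, `L a` is a neighborhood in `N a` of `{x ∈ N a | f x ∉ int (N b)}`. -/
  precedes_nhds : ∀ a b, precedes a b → ∀ x ∈ N a, f x ∉ interior (N b) → L a ∈ nhdsWithin x (N a)
  /-- If `a` precedes `b`, then `f (L a) ∩ cl (N b \ L b) = ∅`. -/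
  precedes_disj : ∀ a b, precedes a b → (f '' L a) ∩ closure (N b \ L b) = ∅
  /-- Each pair precedes at least one pair. -/
  exists_succ : ∀ a, ∃ b, precedes a b
  /-- Every allowable sequence of the sets `cl (N a \ L a)` is an isolating neighborhood chain. -/
  chain : ∀ a : ℤ → A, (∀ i, precedes (a i) (a (i + 1))) →
    ∀ x : ℤ → X, (∀ i, f (x i) = x (i + 1)) →
      (∀ i, x i ∈ closure (N (a i) \ L (a i))) →
        ∀ i, x i ∈ interior (closure (N (a i) \ L (a i)))

/-- The invariant set of an index system: points on orbits following an allowable sequence. -/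
def IndexSystem.Inv {X : Type*} [TopologicalSpace X] {f : X → X} {A : Type*}
    (P : IndexSystem X f A) : Set X :=
  {p | ∃ a : ℤ → A, (∀ i, P.precedes (a i) (a (i + 1))) ∧
    ∃ x : ℤ → X, (∀ i, f (x i) = x (i + 1)) ∧ x 0 = p ∧
      ∀ i, x i ∈ closure (P.N (a i) \ P.L (a i))}

theorem stmt9 {X : Type*} [MetricSpace X] [CompactSpace X] {f : X → X}
    (hf : Continuous f) {A : Type*} [Finite A] (P : IndexSystem X f A) :
    IsCompact P.Inv ∧ f '' P.Inv = P.Inv := by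
  constructor
  · letI : TopologicalSpace A := ⊥
    haveI : DiscreteTopology A := ⟨rfl⟩
    set K : Set ((ℤ → A) × (ℤ → X)) :=
      (⋂ i : ℤ, {p : (ℤ → A) × (ℤ → X) | P.precedes (p.1 i) (p.1 (i+1))}) ∩
      ((⋂ i : ℤ, {p : (ℤ → A) × (ℤ → X) | f (p.2 i) = p.2 (i+1)}) ∩
       (⋂ i : ℤ, {p : (ℤ → A) × (ℤ → X) |
          p.2 i ∈ closure (P.N (p.1 i) \ P.L (p.1 i))})) with hK
    have hKc : IsClosed K := by
      refine IsClosed.inter (isClosed_iInter fun i => ?_)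
        (IsClosed.inter (isClosed_iInter fun i => ?_) (isClosed_iInter fun i => ?_))
      · have hc : Continuous fun p : (ℤ → A) × (ℤ → X) => (p.1 i, p.1 (i+1)) :=
          ((continuous_apply i).comp continuous_fst).prodMk
            ((continuous_apply (i+1)).comp continuous_fst)
        exact (isClosed_discrete {q : A × A | P.precedes q.1 q.2}).preimage hc
      · exact isClosed_eq (hf.comp ((continuous_apply i).comp continuous_snd))
          ((continuous_apply (i+1)).comp continuous_snd)
      · have : {p : (ℤ → A) × (ℤ → X) | p.2 i ∈ closure (P.N (p.1 i) \ P.L (p.1 i))} =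
          ⋃ a : A, ({p : (ℤ → A) × (ℤ → X) | p.1 i = a} ∩
            {p | p.2 i ∈ closure (P.N a \ P.L a)}) := by
          ext p
          simp only [mem_iUnion, mem_inter_iff, mem_setOf_eq]
          constructor
          · exact fun h => ⟨p.1 i, rfl, h⟩
          · rintro ⟨a, rfl, h⟩; exact h
        rw [this]
        refine isClosed_iUnion_of_finite fun a => IsClosed.inter ?_ ?_
        · have hc : Continuous fun p : (ℤ → A) × (ℤ → X) => p.1 i :=
            (continuous_apply i).comp continuous_fst
          exact (isClosed_discrete ({a} : Set A)).preimage hc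
        · exact isClosed_closure.preimage ((continuous_apply i).comp continuous_snd)
    have hInv : P.Inv = (fun p : (ℤ → A) × (ℤ → X) => p.2 0) '' K := by
      ext q
      constructor
      · rintro ⟨a, ha, x, hx, hx0, hmem⟩
        exact ⟨(a, x), ⟨mem_iInter.2 ha, mem_iInter.2 hx, mem_iInter.2 hmem⟩, hx0⟩
      · rintro ⟨⟨a, x⟩, ⟨h1, h2, h3⟩, rfl⟩
        exact ⟨a, fun i => mem_iInter.1 h1 i, x, fun i => mem_iInter.1 h2 i, rfl,
          fun i => mem_iInter.1 h3 i⟩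
    rw [hInv]
    exact (hKc.isCompact).image ((continuous_apply 0).comp continuous_snd)
  · ext q
    constructor
    · rintro ⟨p, ⟨a, ha, x, hx, hx0, hmem⟩, rfl⟩
      refine ⟨fun i => a (i+1), fun i => ha (i+1), fun i => x (i+1),
        fun i => hx (i+1), show x (0+1) = f p by rw [← hx 0, hx0], fun i => hmem (i+1)⟩
    · rintro ⟨a, ha, x, hx, hx0, hmem⟩
      refine ⟨x (-1), ⟨fun i => a (i-1), fun i => by simpa using ha (i-1),
        fun i => x (i-1), fun i => by simpa using hx (i-1), show x (0-1) = x (-1) by norm_num,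
        fun i => hmem (i-1)⟩, by simpa [hx0] using hx (-1)⟩
end

section
/- Every isolated invariant set S for a continuous map f : X → X on a compact metric space admits an index pair (N, L); in particular, for any neighborhood U of S there exists an index pair with N \ L ⊆ U. -/
open Set

section Aux

variable {X : Type*} [MetricSpace X] [CompactSpace X] {f : X → X}

lemma aux_imp_closed {Y : Type*} [TopologicalSpace Y] (p : Prop) (s : Set Y) (hs : IsClosed s) :
    IsClosed {x : Y | p → x ∈ s} := by
  by_cases hp : p
  · simpa [hp] using hs
  · simp [hp]

lemma aux_orbit_closed (hf : Continuous f) (K : Set X) (hK : IsClosed K) :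
    IsClosed {x : ℤ → X | IsOrbit f x ∧ ∀ i, x i ∈ K} := by
  have h1 : IsClosed {x : ℤ → X | IsOrbit f x} := by
    have he : {x : ℤ → X | IsOrbit f x} = ⋂ i : ℤ, {x | f (x i) = x (i + 1)} := by
      ext x; simp [IsOrbit]
    rw [he]
    exact isClosed_iInter fun i =>
      isClosed_eq (hf.comp (continuous_apply i)) (continuous_apply (i + 1))
  have h2 : IsClosed {x : ℤ → X | ∀ i, x i ∈ K} := by
    have he : {x : ℤ → X | ∀ i, x i ∈ K} = ⋂ i : ℤ, (fun x : ℤ → X => x i) ⁻¹' K := by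
      ext x; simp
    rw [he]
    exact isClosed_iInter fun i => hK.preimage (continuous_apply i)
  exact h1.inter h2

lemma aux_invSet_eq_image (f : X → X) (K : Set X) :
    InvSet f K = (fun x : ℤ → X => x 0) '' {x : ℤ → X | IsOrbit f x ∧ ∀ i, x i ∈ K} := by
  ext p
  constructor
  · rintro ⟨x, h1, h2, h3⟩; exact ⟨x, ⟨h1, h3⟩, h2⟩
  · rintro ⟨x, ⟨h1, h3⟩, h2⟩; exact ⟨x, h1, h2, h3⟩

lemma aux_invSet_isCompact (hf : Continuous f) (K : Set X) (hK : IsClosed K) :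
    IsCompact (InvSet f K) := by
  rw [aux_invSet_eq_image f K]
  exact ((aux_orbit_closed hf K hK).isCompact).image (continuous_apply 0)

lemma aux_invSet_mono (f : X → X) {K K' : Set X} (h : K ⊆ K') : InvSet f K ⊆ InvSet f K' := by
  rintro p ⟨x, h1, h2, h3⟩; exact ⟨x, h1, h2, fun i => h (h3 i)⟩

lemma aux_invSet_subset (f : X → X) (K : Set X) : InvSet f K ⊆ K := by
  rintro p ⟨x, h1, h2, h3⟩; rw [← h2]; exact h3 0

/-- every point of an orbit witnessing membership in `InvSet` is itself in `InvSet`. -/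
lemma aux_mem_invSet_shift (f : X → X) (K : Set X) {x : ℤ → X} (h1 : IsOrbit f x)
    (h3 : ∀ i, x i ∈ K) (j : ℤ) : x j ∈ InvSet f K := by
  refine ⟨fun i => x (i + j), fun i => ?_, by simp, fun i => h3 (i + j)⟩
  show f (x (i + j)) = x (i + 1 + j)
  rw [h1 (i + j)]
  congr 1
  ring

lemma aux_invSet_iInter (hf : Continuous f) (K : ℕ → Set X)
    (hdec : ∀ n, K (n + 1) ⊆ K n) (hcl : ∀ n, IsClosed (K n)) :
    (⋂ n, InvSet f (K n)) ⊆ InvSet f (⋂ n, K n) := by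
  intro p hp
  simp only [Set.mem_iInter] at hp
  set C : ℕ → Set (ℤ → X) :=
    fun n => {x : ℤ → X | (IsOrbit f x ∧ ∀ i, x i ∈ K n) ∧ x 0 = p} with hC
  have hCdec : ∀ n, C (n + 1) ⊆ C n := by
    rintro n x ⟨⟨h1, h2⟩, h3⟩; exact ⟨⟨h1, fun i => hdec n (h2 i)⟩, h3⟩
  have hCcl : ∀ n, IsClosed (C n) := by
    intro n
    exact (aux_orbit_closed hf (K n) (hcl n)).inter (isClosed_eq (continuous_apply 0) continuous_const)
  have hCne : ∀ n, (C n).Nonempty := by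
    intro n
    obtain ⟨x, h1, h2, h3⟩ := hp n
    exact ⟨x, ⟨h1, h3⟩, h2⟩
  have := IsCompact.nonempty_iInter_of_sequence_nonempty_isCompact_isClosed C hCdec hCne
    ((hCcl 0).isCompact) hCcl
  obtain ⟨x, hx⟩ := this
  simp only [Set.mem_iInter, hC, Set.mem_setOf_eq] at hx
  refine ⟨x, (hx 0).1.1, (hx 0).2, fun i => ?_⟩
  simp only [Set.mem_iInter]
  exact fun n => (hx n).1.2 i

/-- a decreasing sequence of closed sets in a compact space whose intersection lies in an open
set must eventually lie in that open set. -/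
lemma aux_nested_subset_open {C : ℕ → Set X} {Ω : Set X}
    (hdec : ∀ n, C (n + 1) ⊆ C n) (hcl : ∀ n, IsClosed (C n)) (hΩ : IsOpen Ω)
    (h : (⋂ n, C n) ⊆ Ω) : ∃ n, C n ⊆ Ω := by
  by_contra hcon
  push_neg at hcon
  have hne : ∀ n, (C n \ Ω).Nonempty := by
    intro n
    obtain ⟨x, hx1, hx2⟩ := Set.not_subset.mp (hcon n)
    exact ⟨x, hx1, hx2⟩
  have hdec' : ∀ n, C (n + 1) \ Ω ⊆ C n \ Ω := fun n => diff_subset_diff_left (hdec n)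
  have hcl' : ∀ n, IsClosed (C n \ Ω) := fun n => (hcl n).sdiff hΩ
  obtain ⟨x, hx⟩ := IsCompact.nonempty_iInter_of_sequence_nonempty_isCompact_isClosed _
    hdec' hne ((hcl' 0).isCompact) hcl'
  simp only [Set.mem_iInter, Set.mem_diff] at hx
  exact (hx 0).2 (h (Set.mem_iInter.2 fun n => (hx n).1))

/-- backward-orbit extraction: a point in all forward images of a forward-invariant compact set
belongs to the maximal invariant set. -/
lemma aux_iInter_iterate_image (hf : Continuous f) (T : Set X) (hT : IsClosed T)
    (hfwd : ∀ x ∈ T, f x ∈ T) : (⋂ n, f^[n] '' T) ⊆ InvSet f T := by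
  intro p hp
  simp only [Set.mem_iInter] at hp
  have hiter : ∀ k, ∀ y ∈ T, f^[k] y ∈ T := by
    intro k
    induction k with
    | zero => intro y hy; simpa using hy
    | succ k ih =>
      intro y hy
      rw [Function.iterate_succ_apply]
      exact ih _ (hfwd y hy)
  set C : ℕ → Set (ℤ → X) := fun n =>
    {x : ℤ → X | x 0 = p ∧ ∀ i : ℤ, -(n : ℤ) ≤ i → (f (x i) = x (i + 1) ∧ x i ∈ T)} with hC
  have hCcl : ∀ n, IsClosed (C n) := by
    intro n
    have : C n = {x : ℤ → X | x 0 = p} ∩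
        ⋂ i : ℤ, {x : ℤ → X | -(n : ℤ) ≤ i → x ∈ {y : ℤ → X | f (y i) = y (i + 1) ∧ y i ∈ T}} := by
      ext x
      simp only [hC, Set.mem_setOf_eq, Set.mem_inter_iff, Set.mem_iInter, forall_and]
    rw [this]
    refine (isClosed_eq (continuous_apply 0) continuous_const).inter (isClosed_iInter fun i => ?_)
    refine aux_imp_closed _ _ ?_
    exact (isClosed_eq (hf.comp (continuous_apply i)) (continuous_apply (i + 1))).inter
      (hT.preimage (continuous_apply i))
  have hCdec : ∀ n, C (n + 1) ⊆ C n := by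
    rintro n x ⟨h0, h⟩
    refine ⟨h0, fun i hi => h i (by omega)⟩
  have hCne : ∀ n, (C n).Nonempty := by
    intro n
    obtain ⟨a, ha, hfa⟩ := hp n
    refine ⟨fun i => f^[(i + n).toNat] a, ?_, ?_⟩
    · show f^[((0 : ℤ) + n).toNat] a = p
      simp only [zero_add, Int.toNat_natCast]
      exact hfa
    · intro i hi
      constructor
      · show f (f^[(i + n).toNat] a) = f^[(i + 1 + n).toNat] a
        have harith : (i + 1 + n).toNat = (i + n).toNat + 1 := by omega
        rw [harith, Function.iterate_succ_apply']
      · exact hiter _ a ha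
  obtain ⟨x, hx⟩ := IsCompact.nonempty_iInter_of_sequence_nonempty_isCompact_isClosed C hCdec hCne
    ((hCcl 0).isCompact) hCcl
  simp only [Set.mem_iInter, hC, Set.mem_setOf_eq] at hx
  refine ⟨x, fun i => ?_, (hx 0).1, fun i => ?_⟩
  · obtain ⟨n, hn⟩ : ∃ n : ℕ, -(n : ℤ) ≤ i := ⟨i.natAbs, by omega⟩
    exact ((hx n).2 i hn).1
  · obtain ⟨n, hn⟩ : ∃ n : ℕ, -(n : ℤ) ≤ i := ⟨i.natAbs, by omega⟩
    exact ((hx n).2 i hn).2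

/-- the closure of an open set is regular closed. -/
lemma aux_regular_closure {Y : Type*} [TopologicalSpace Y] (V : Set Y) (hV : IsOpen V) :
    closure V = closure (interior (closure V)) := by
  apply Subset.antisymm
  · exact closure_mono (hV.subset_interior_iff.mpr subset_closure)
  · exact closure_mono interior_subset |>.trans (by rw [closure_closure])

end Aux

theorem stmt14 {X : Type*} [MetricSpace X] [CompactSpace X] {f : X → X}
    (hf : Continuous f) {S : Set X}
    -- `S` is an isolated invariant set
    (hSiso : ∃ I : Set X, IsCompact I ∧ InvSet f I = S ∧ S ⊆ interior I)
    -- `U` is a neighborhood of `S`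
    {U : Set X} (hU : S ⊆ interior U) :
    ∃ N L : Set X, IsCompact N ∧ IsCompact L ∧ L ⊆ N ∧
      N = closure (interior N) ∧ L = closure (interior L) ∧
      -- `cl(N \ L)` is an isolating neighborhood for `S`
      InvSet f (closure (N \ L)) = S ∧ S ⊆ interior (closure (N \ L)) ∧
      -- `L` is a neighborhood in `N` of the exit set
      (∀ x ∈ N, f x ∉ interior N → L ∈ nhdsWithin x N) ∧
      -- `f(L) ∩ cl(N \ L) = ∅`
      (f '' L) ∩ closure (N \ L) = ∅ ∧
      N \ L ⊆ U := by
  classical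
  obtain ⟨I₀, hI₀c, hI₀inv, hI₀int⟩ := hSiso
  -- Basic invariance facts about S
  have hSinv : ∀ p ∈ S, ∃ x : ℤ → X, IsOrbit f x ∧ x 0 = p ∧ ∀ i, x i ∈ S := by
    intro p hp
    rw [← hI₀inv] at hp
    obtain ⟨x, h1, h2, h3⟩ := hp
    refine ⟨x, h1, h2, fun i => ?_⟩
    rw [← hI₀inv]
    exact aux_mem_invSet_shift f I₀ h1 h3 i
  have hSsubK : ∀ K : Set X, S ⊆ K → S ⊆ InvSet f K := by
    intro K hK p hp
    obtain ⟨x, h1, h2, h3⟩ := hSinv p hp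
    exact ⟨x, h1, h2, fun i => hK (h3 i)⟩
  have hfS : ∀ p ∈ S, f p ∈ S := by
    intro p hp
    obtain ⟨x, h1, h2, h3⟩ := hSinv p hp
    have h0 := h1 0
    rw [h2] at h0
    rw [h0]
    exact h3 1
  have hfiterS : ∀ n : ℕ, ∀ p ∈ S, f^[n] p ∈ S := by
    intro n
    induction n with
    | zero => intro p hp; simpa using hp
    | succ n ih =>
      intro p hp
      rw [Function.iterate_succ_apply]
      exact ih _ (hfS p hp)
  have hScomp : IsCompact S := by
    rw [← hI₀inv]; exact aux_invSet_isCompact hf I₀ hI₀c.isClosed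
  -- the basic open region
  set G := interior I₀ ∩ interior U with hGdef
  have hGopen : IsOpen G := isOpen_interior.inter isOpen_interior
  have hSG : S ⊆ G := fun p hp => ⟨hI₀int hp, hU hp⟩
  have hGU : G ⊆ U := fun x hx => interior_subset hx.2
  obtain ⟨r₀, hr₀pos, hr₀⟩ := hScomp.exists_cthickening_subset_open hGopen hSG
  set I := Metric.cthickening r₀ S with hIdef
  have hIclosed : IsClosed I := Metric.isClosed_cthickening
  have hSI : S ⊆ I := Metric.self_subset_cthickening S
  have hIG : I ⊆ G := hr₀
  have hII₀ : I ⊆ I₀ := hIG.trans fun x hx => interior_subset hx.1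
  have hInvI : InvSet f I = S := by
    apply Subset.antisymm
    · rw [← hI₀inv]; exact aux_invSet_mono f hII₀
    · exact hSsubK I hSI
  -- the forward-trapped set A of I, and its image fA
  set A := {x : X | ∀ n : ℕ, f^[n] x ∈ I} with hAdef
  have hAclosed : IsClosed A := by
    have he : A = ⋂ n : ℕ, (f^[n]) ⁻¹' I := by ext x; simp [hAdef]
    rw [he]; exact isClosed_iInter fun n => hIclosed.preimage (hf.iterate n)
  have hSA : S ⊆ A := fun p hp n => hSI (hfiterS n p hp)
  have hfwdA : ∀ x ∈ A, f x ∈ A := by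
    intro x hx n
    rw [← Function.iterate_succ_apply]
    exact hx (n + 1)
  set fA := f '' A with hfAdef
  have hfAcomp : IsCompact fA := (hAclosed.isCompact).image hf
  have hfAclosed : IsClosed fA := hfAcomp.isClosed
  have hfAA : fA ⊆ A := by rintro y ⟨x, hx, rfl⟩; exact hfwdA x hx
  have hAI : A ⊆ I := fun x hx => by simpa using hx 0
  have hfAI : fA ⊆ I := hfAA.trans hAI
  have hSfA : S ⊆ fA := by
    intro p hp
    obtain ⟨x, h1, h2, h3⟩ := hSinv p hp
    refine ⟨x (-1), hSA (h3 (-1)), ?_⟩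
    have hm1 := h1 (-1)
    simpa [h2] using hm1
  -- the absorbing neighborhood W₀
  set W₀ := Metric.thickening r₀ S with hW₀def
  have hW₀open : IsOpen W₀ := Metric.isOpen_thickening
  have hclW₀I : closure W₀ ⊆ I :=
    closure_minimal (Metric.thickening_subset_cthickening _ _) hIclosed
  -- choice of ε₀ : the world Kw = cthickening ε₀ fA is isolating with Inv ⊆ S
  have hKinter : (⋂ n : ℕ, Metric.cthickening (1 / ((n : ℝ) + 1)) fA) ⊆ fA := by
    intro x hx
    simp only [Set.mem_iInter] at hx
    have hxc : x ∈ closure fA := by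
      rw [Metric.closure_eq_iInter_cthickening fA]
      simp only [Set.mem_iInter]
      intro δ hδ
      obtain ⟨n, hn⟩ := exists_nat_one_div_lt hδ
      exact Metric.cthickening_mono (le_of_lt hn) fA (hx n)
    rwa [hfAclosed.closure_eq] at hxc
  have hraddec : ∀ n : ℕ, (1 : ℝ) / ((n : ℝ) + 1 + 1) ≤ 1 / ((n : ℝ) + 1) := by
    intro n
    apply one_div_le_one_div_of_le
    · positivity
    · linarith
  have hchain : (⋂ n : ℕ, InvSet f (Metric.cthickening (1 / ((n : ℝ) + 1)) fA)) ⊆ W₀ := by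
    have h1 := aux_invSet_iInter hf (fun n : ℕ => Metric.cthickening (1 / ((n : ℝ) + 1)) fA)
      (fun n => by
        apply Metric.cthickening_mono
        push_cast
        exact hraddec n)
      (fun n => Metric.isClosed_cthickening)
    have h2 : InvSet f (⋂ n : ℕ, Metric.cthickening (1 / ((n : ℝ) + 1)) fA) ⊆ S := by
      have := aux_invSet_mono f hKinter
      have h3 : InvSet f fA ⊆ InvSet f I := aux_invSet_mono f hfAI
      rw [hInvI] at h3
      exact (this.trans h3)
    intro x hx
    exact Metric.self_subset_thickening hr₀pos S (h2 (h1 hx))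
  obtain ⟨n₀, hn₀⟩ := aux_nested_subset_open
    (C := fun n : ℕ => InvSet f (Metric.cthickening (1 / ((n : ℝ) + 1)) fA))
    (fun n => aux_invSet_mono f (by
      apply Metric.cthickening_mono
      push_cast
      exact hraddec n))
    (fun n => (aux_invSet_isCompact hf _ Metric.isClosed_cthickening).isClosed)
    hW₀open hchain
  obtain ⟨εG, hεGpos, hεG⟩ := hfAcomp.exists_cthickening_subset_open hGopen (hfAI.trans hIG)
  set ε₀ := min (1 / ((n₀ : ℝ) + 1)) εG with hε₀def
  have hε₀pos : 0 < ε₀ := lt_min (by positivity) hεGpos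
  set Kw := Metric.cthickening ε₀ fA with hKwdef
  have hKwclosed : IsClosed Kw := Metric.isClosed_cthickening
  have hKwG : Kw ⊆ G := (Metric.cthickening_mono (min_le_right _ _) fA).trans hεG
  have hInvKwW₀ : InvSet f Kw ⊆ W₀ :=
    (aux_invSet_mono f (Metric.cthickening_mono (min_le_left _ _) fA)).trans hn₀
  have hInvKwS : InvSet f Kw ⊆ S := by
    intro p hp
    obtain ⟨x, h1, h2, h3⟩ := hp
    have hx : ∀ i, x i ∈ closure W₀ := fun i =>
      subset_closure (hInvKwW₀ (aux_mem_invSet_shift f Kw h1 h3 i))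
    have hmem : p ∈ InvSet f (closure W₀) := ⟨x, h1, h2, hx⟩
    rw [← hInvI]
    exact aux_invSet_mono f hclW₀I hmem
  -- the trapped set T₀ of the world Kw
  set T₀ := {x : X | ∀ n : ℕ, f^[n] x ∈ Kw} with hT₀def
  have hT₀closed : IsClosed T₀ := by
    have he : T₀ = ⋂ n : ℕ, (f^[n]) ⁻¹' Kw := by ext x; simp [hT₀def]
    rw [he]; exact isClosed_iInter fun n => hKwclosed.preimage (hf.iterate n)
  have hT₀comp : IsCompact T₀ := hT₀closed.isCompact
  have hT₀fwd : ∀ x ∈ T₀, f x ∈ T₀ := by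
    intro x hx n
    rw [← Function.iterate_succ_apply]
    exact hx (n + 1)
  have hT₀Kw : T₀ ⊆ Kw := fun x hx => by simpa using hx 0
  have hST₀ : S ⊆ T₀ := fun p hp n =>
    Metric.self_subset_cthickening fA (hSfA (hfiterS n p hp))
  have hT₀invS : (⋂ n : ℕ, f^[n] '' T₀) ⊆ S := by
    have h1 := aux_iInter_iterate_image hf T₀ hT₀closed hT₀fwd
    have h2 : InvSet f T₀ ⊆ InvSet f Kw := aux_invSet_mono f hT₀Kw
    exact h1.trans (h2.trans hInvKwS)
  -- the small neighborhood W' of S, deep inside thickening (ε₀/2) fA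
  have hSthick : S ⊆ Metric.thickening (ε₀ / 2) fA :=
    hSfA.trans (Metric.self_subset_thickening (half_pos hε₀pos) fA)
  obtain ⟨r', hr'pos, hr'⟩ :=
    hScomp.exists_cthickening_subset_open Metric.isOpen_thickening hSthick
  set W' := Metric.thickening r' S with hW'def
  have hW'open : IsOpen W' := Metric.isOpen_thickening
  have hSW' : S ⊆ W' := Metric.self_subset_thickening hr'pos S
  have hclW' : closure W' ⊆ Metric.thickening (ε₀ / 2) fA :=
    (closure_minimal (Metric.thickening_subset_cthickening _ _)
      Metric.isClosed_cthickening).trans hr'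
  -- uniform absorption time n₂
  set imgT : ℕ → Set X := fun n => f^[n] '' T₀ with himgTdef
  have himgdec : ∀ n, imgT (n + 1) ⊆ imgT n := by
    rintro n y ⟨a, ha, rfl⟩
    exact ⟨f a, hT₀fwd a ha, (Function.iterate_succ_apply f n a).symm⟩
  have himgclosed : ∀ n, IsClosed (imgT n) := fun n =>
    (hT₀comp.image (hf.iterate n)).isClosed
  obtain ⟨n₂, hn₂⟩ := aux_nested_subset_open himgdec himgclosed hW'open
    (hT₀invS.trans (hSW'))
  have himgantitone : Antitone imgT := antitone_nat_of_succ_le himgdec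
  have himgW' : ∀ n, n₂ ≤ n → imgT n ⊆ W' := fun n hn => (himgantitone hn).trans hn₂
  -- the time horizon and the decreasing radii
  set m := n₂ + 1 with hmdef
  have hmpos : 0 < m := Nat.succ_pos _
  set ε : ℕ → ℝ := fun k => ε₀ / 2 + ε₀ / 2 * ((m - k : ℕ) : ℝ) / m with hεdef
  have hmR : (0 : ℝ) < (m : ℝ) := by exact_mod_cast hmpos
  have hε₀2 : (0 : ℝ) < ε₀ / 2 := half_pos hε₀pos
  have hεle : ∀ k, ε k ≤ ε₀ := by
    intro k
    have h1 : ((m - k : ℕ) : ℝ) ≤ (m : ℝ) := by exact_mod_cast Nat.sub_le m k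
    have h2 : ε₀ / 2 * ((m - k : ℕ) : ℝ) / m ≤ ε₀ / 2 := by
      rw [div_le_iff₀ hmR]
      exact mul_le_mul_of_nonneg_left h1 hε₀2.le
    simp only [hεdef]
    linarith
  have hεhalf : ∀ k, k < m → ε₀ / 2 < ε k := by
    intro k hk
    have h1 : (0 : ℝ) < ((m - k : ℕ) : ℝ) := by
      have h0 : 1 ≤ m - k := by omega
      have h0' : (1 : ℝ) ≤ ((m - k : ℕ) : ℝ) := by exact_mod_cast h0
      linarith
    have h2 : 0 < ε₀ / 2 * ((m - k : ℕ) : ℝ) / m := div_pos (mul_pos hε₀2 h1) hmR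
    simp only [hεdef]
    linarith
  have hεpos : ∀ k, k < m → 0 < ε k := fun k hk => lt_trans hε₀2 (hεhalf k hk)
  have hεdec : ∀ k, k + 1 < m → ε (k + 1) < ε k := by
    intro k hk
    have h1 : ((m - (k + 1) : ℕ) : ℝ) < ((m - k : ℕ) : ℝ) := by
      have h0 : m - (k + 1) < m - k := by omega
      exact_mod_cast h0
    simp only [hεdef]
    have h2 : ε₀ / 2 * ((m - (k + 1) : ℕ) : ℝ) / m < ε₀ / 2 * ((m - k : ℕ) : ℝ) / m :=
      (div_lt_div_iff_of_pos_right hmR).mpr (mul_lt_mul_of_pos_left h1 hε₀2)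
    linarith
  have hε0 : ε 0 = ε₀ := by
    simp only [hεdef, Nat.sub_zero]
    field_simp
    ring
  -- the raw neighborhood and its open core
  set Nraw := {x : X | (∀ k, k < m → f^[k] x ∈ Metric.cthickening (ε k) fA) ∧
      f^[m] x ∈ closure W'} with hNrawdef
  have hNrawclosed : IsClosed Nraw := by
    have he : Nraw = (⋂ k : ℕ, {x : X | k < m → x ∈ (f^[k]) ⁻¹' Metric.cthickening (ε k) fA}) ∩
        (f^[m]) ⁻¹' closure W' := by
      ext x
      simp only [hNrawdef, Set.mem_setOf_eq, Set.mem_inter_iff, Set.mem_iInter, Set.mem_preimage]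
    rw [he]
    exact IsClosed.inter
      (isClosed_iInter fun k =>
        aux_imp_closed _ _ (Metric.isClosed_cthickening.preimage (hf.iterate k)))
      (isClosed_closure.preimage (hf.iterate m))
  set Ω := {x : X | (∀ k, k < m → f^[k] x ∈ Metric.thickening (ε k) fA) ∧ f^[m] x ∈ W'}
    with hΩdef
  have hΩopen : IsOpen Ω := by
    have he : Ω = (⋂ k ∈ Finset.range m, (f^[k]) ⁻¹' Metric.thickening (ε k) fA) ∩
        (f^[m]) ⁻¹' W' := by
      ext x
      simp only [hΩdef, Set.mem_setOf_eq, Set.mem_inter_iff, Set.mem_iInter, Set.mem_preimage,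
        Finset.mem_range]
    rw [he]
    exact (isOpen_biInter_finset fun k _ =>
      Metric.isOpen_thickening.preimage (hf.iterate k)).inter (hW'open.preimage (hf.iterate m))
  have hΩNraw : Ω ⊆ Nraw := by
    rintro x ⟨h1, h2⟩
    exact ⟨fun k hk => Metric.thickening_subset_cthickening _ _ (h1 k hk), subset_closure h2⟩
  have hSΩ : S ⊆ Ω := by
    intro p hp
    exact ⟨fun k hk => Metric.self_subset_thickening (hεpos k hk) fA (hSfA (hfiterS k p hp)),
      hSW' (hfiterS m p hp)⟩
  have hNrawKw : Nraw ⊆ Kw := by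
    rintro x ⟨h1, _⟩
    have h0 := h1 0 hmpos
    rw [Function.iterate_zero_apply, hε0] at h0
    exact h0
  -- regularized neighborhood N
  set N := closure (interior Nraw) with hNdef
  have hNclosed : IsClosed N := isClosed_closure
  have hNcomp : IsCompact N := hNclosed.isCompact
  have hNNraw : N ⊆ Nraw := closure_minimal interior_subset hNrawclosed
  have hNreg : N = closure (interior N) := by
    rw [hNdef]; exact aux_regular_closure _ isOpen_interior
  have hΩN : Ω ⊆ N := fun x hx => subset_closure (interior_maximal hΩNraw hΩopen hx)
  have hΩintN : Ω ⊆ interior N := interior_maximal hΩN hΩopen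
  have hSN : S ⊆ N := hSΩ.trans hΩN
  have hSintN : S ⊆ interior N := hSΩ.trans hΩintN
  have hNKw : N ⊆ Kw := hNNraw.trans hNrawKw
  have hNG : N ⊆ G := hNKw.trans hKwG
  have hInvN : InvSet f N = S :=
    Subset.antisymm ((aux_invSet_mono f hNKw).trans hInvKwS) (hSsubK N hSN)
  -- the trapped set of N
  set T := {x : X | ∀ n : ℕ, f^[n] x ∈ N} with hTdef
  have hTclosed : IsClosed T := by
    have he : T = ⋂ n : ℕ, (f^[n]) ⁻¹' N := by ext x; simp [hTdef]
    rw [he]; exact isClosed_iInter fun n => hNclosed.preimage (hf.iterate n)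
  have hTcomp : IsCompact T := hTclosed.isCompact
  have hST : S ⊆ T := fun p hp n => hSN (hfiterS n p hp)
  have hTT₀ : T ⊆ T₀ := fun x hx n => hNKw (hx n)
  -- KEY STEP : images of trapped points are in the open core
  have hfTΩ : ∀ x ∈ T, f x ∈ Ω := by
    intro x hx
    have hxN : x ∈ Nraw := hNNraw (by simpa using hx 0)
    have hxT₀ : x ∈ T₀ := hTT₀ hx
    have hfmx : f^[m] x ∈ W' := himgW' m (by omega) ⟨x, hxT₀, rfl⟩
    have hfm1x : f^[m + 1] x ∈ W' := himgW' (m + 1) (by omega) ⟨x, hxT₀, rfl⟩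
    constructor
    · intro k hk
      have hiter : f^[k] (f x) = f^[k + 1] x := (Function.iterate_succ_apply f k x).symm
      rcases Nat.lt_or_ge (k + 1) m with hkm | hkm
      · have hslot : f^[k + 1] x ∈ Metric.cthickening (ε (k + 1)) fA := hxN.1 (k + 1) hkm
        rw [hiter]
        exact Metric.cthickening_subset_thickening' (hεpos k hk) (hεdec k hkm) fA hslot
      · have hkm' : k + 1 = m := le_antisymm (Nat.succ_le_of_lt hk) hkm
        rw [hiter, hkm']
        have h1 : f^[m] x ∈ Metric.thickening (ε₀ / 2) fA := hclW' (subset_closure hfmx)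
        exact Metric.thickening_mono (le_of_lt (hεhalf k hk)) fA h1
    · have hiter : f^[m] (f x) = f^[m + 1] x := (Function.iterate_succ_apply f m x).symm
      rw [hiter]
      exact hfm1x
  have hfTint : ∀ x ∈ T, f x ∈ interior N := fun x hx => hΩintN (hfTΩ x hx)
  -- the exit set E
  set E := {x : X | x ∈ N ∧ f x ∉ interior N} with hEdef
  have hEclosed : IsClosed E := by
    have he : E = N ∩ f ⁻¹' (interior N)ᶜ := by
      ext x; simp [hEdef, Set.mem_inter_iff]
    rw [he]
    exact hNclosed.inter ((isOpen_interior.isClosed_compl).preimage hf)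
  have hEcomp : IsCompact E := hEclosed.isCompact
  have hET : ∀ x ∈ E, x ∉ T := fun x hxE hxT => hxE.2 (hfTint x hxT)
  -- the conveyor
  set Gs : ℕ → Set X := fun j => {x : X | x ∈ E ∧ ∀ i : ℕ, 1 ≤ i → i ≤ j + 1 → f^[i] x ∈ N}
    with hGsdef
  have hGsclosed : ∀ j, IsClosed (Gs j) := by
    intro j
    have he : Gs j = E ∩ ⋂ i : ℕ, {x : X | 1 ≤ i → i ≤ j + 1 → x ∈ (f^[i]) ⁻¹' N} := by
      ext x
      simp only [hGsdef, Set.mem_setOf_eq, Set.mem_inter_iff, Set.mem_iInter, Set.mem_preimage]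
    rw [he]
    refine hEclosed.inter (isClosed_iInter fun i => ?_)
    exact aux_imp_closed _ {x : X | i ≤ j + 1 → x ∈ (f^[i]) ⁻¹' N}
      (aux_imp_closed _ _ (hNclosed.preimage (hf.iterate i)))
  have hGsdec : ∀ j, Gs (j + 1) ⊆ Gs j := by
    rintro j x ⟨hxE, hx⟩
    exact ⟨hxE, fun i h1 h2 => hx i h1 (by omega)⟩
  have hGsterm : ∃ m₁ : ℕ, Gs m₁ = ∅ := by
    by_contra hcon
    push_neg at hcon
    have hne : ∀ j, (Gs j).Nonempty := hcon
    obtain ⟨x, hx⟩ := IsCompact.nonempty_iInter_of_sequence_nonempty_isCompact_isClosed Gs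
      hGsdec hne ((hGsclosed 0).isCompact) hGsclosed
    simp only [Set.mem_iInter] at hx
    have hxE : x ∈ E := (hx 0).1
    have hxT : x ∈ T := by
      intro n
      rcases Nat.eq_zero_or_pos n with hn | hn
      · subst hn; simpa using hxE.1
      · exact (hx n).2 n hn (by omega)
    exact hET x hxE hxT
  obtain ⟨m₁, hm₁⟩ := hGsterm
  set D : ℕ → Set X := fun j => f^[j + 1] '' Gs j with hDdef
  have hDcomp : ∀ j, IsCompact (D j) :=
    fun j => ((hGsclosed j).isCompact).image (hf.iterate (j + 1))
  have hDempty : D m₁ = ∅ := by simp [hDdef, hm₁]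
  have hDT : ∀ j, ∀ z ∈ D j, z ∉ T := by
    rintro j z ⟨x, hx, rfl⟩ hzT
    apply hET x hx.1
    intro n
    rcases Nat.lt_or_ge n (j + 2) with hn | hn
    · rcases Nat.eq_zero_or_pos n with h0 | h0
      · subst h0; simpa using hx.1.1
      · exact hx.2 n h0 (by omega)
    · have harith : n = (n - (j + 1)) + (j + 1) := by omega
      rw [harith, Function.iterate_add_apply]
      exact hzT (n - (j + 1))
  have hDchain : ∀ j, ∀ z ∈ D j, f z ∈ N → f z ∈ D (j + 1) := by
    rintro j z ⟨x, hx, rfl⟩ hfz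
    refine ⟨x, ⟨hx.1, fun i h1 h2 => ?_⟩, ?_⟩
    · rcases Nat.lt_or_ge i (j + 2) with hi | hi
      · exact hx.2 i h1 (by omega)
      · have hi2 : i = j + 2 := by omega
        subst hi2
        rw [← Function.iterate_succ_apply' f (j + 1) x] at hfz
        exact hfz
    · rw [Function.iterate_succ_apply' f (j + 1) x]
  have hfED : ∀ x ∈ E, f x ∈ N → f x ∈ D 0 := by
    intro x hx hfx
    refine ⟨x, ⟨hx, fun i h1 h2 => ?_⟩, by simp⟩
    have hi : i = 1 := by omega
    subst hi
    simpa using hfx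
  -- separation of the conveyor from the trapped set
  set Call := E ∪ ⋃ j ∈ Finset.range m₁, D j with hCalldef
  have hCallcomp : IsCompact Call := by
    apply hEcomp.union
    apply (Finset.range m₁).finite_toSet.isCompact_biUnion
    exact fun j _ => hDcomp j
  have hCallT : ∀ z ∈ Call, z ∉ T := by
    rintro z (hz | hz)
    · exact hET z hz
    · simp only [Set.mem_iUnion] at hz
      obtain ⟨j, _, hj⟩ := hz
      exact hDT j z hj
  obtain ⟨d₁, hd₁pos, hd₁⟩ := hTcomp.exists_cthickening_subset_open
    hCallcomp.isClosed.isOpen_compl (fun x hx hmem => hCallT x hmem hx)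
  have hsep : ∀ z ∈ Call, z ∉ Metric.cthickening (d₁ / 2) T := by
    intro z hz hmem
    exact hd₁ (Metric.cthickening_mono (by linarith) T hmem) hz
  -- backwards recursion : construction of the exit funnel
  have haux : ∀ i j : ℕ, j + i = m₁ → ∃ Q : Set X, IsOpen Q ∧ D j ⊆ Q ∧
      closure Q ⊆ (Metric.cthickening (d₁ / 2) T)ᶜ ∧
      (∀ z ∈ f '' closure Q, z ∈ N → z ∈ Q) := by
    intro i
    induction i with
    | zero =>
      intro j hj
      have hjm : j = m₁ := by omega
      refine ⟨∅, isOpen_empty, ?_, by simp, by simp⟩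
      rw [hjm, hDempty]
    | succ i ih =>
      intro j hj
      obtain ⟨Q', hQ'open, hDQ', hclQ', hQ'img⟩ := ih (j + 1) (by omega)
      have hjm₁ : j < m₁ := by omega
      set Θ := f ⁻¹' (Q' ∪ Nᶜ) ∩ (Metric.cthickening (d₁ / 2) T)ᶜ with hΘdef
      have hΘopen : IsOpen Θ :=
        ((hQ'open.union hNclosed.isOpen_compl).preimage hf).inter
          Metric.isClosed_cthickening.isOpen_compl
      have hDΘ : D j ⊆ Θ := by
        intro z hz
        constructor
        · by_cases hfz : f z ∈ N
          · exact Or.inl (hDQ' (hDchain j z hz hfz))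
          · exact Or.inr hfz
        · exact hsep z (Or.inr (Set.mem_biUnion (Finset.mem_coe.mpr (Finset.mem_range.mpr hjm₁)) hz))
      obtain ⟨σ, hσpos, hσ⟩ := (hDcomp j).exists_cthickening_subset_open hΘopen hDΘ
      refine ⟨Metric.thickening σ (D j) ∪ Q', (Metric.isOpen_thickening).union hQ'open,
        fun z hz => Or.inl (Metric.self_subset_thickening hσpos _ hz), ?_, ?_⟩
      · rw [closure_union]
        apply Set.union_subset
        · intro z hz
          exact (hσ (closure_minimal (Metric.thickening_subset_cthickening _ _)
            Metric.isClosed_cthickening hz)).2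
        · exact hclQ'
      · rintro z ⟨w, hw, rfl⟩ hfN
        rw [closure_union] at hw
        rcases hw with hw | hw
        · have hwσ : w ∈ Metric.cthickening σ (D j) :=
            closure_minimal (Metric.thickening_subset_cthickening _ _)
              Metric.isClosed_cthickening hw
          rcases (hσ hwσ).1 with h | h
          · exact Or.inr h
          · exact absurd hfN h
        · exact Or.inr (hQ'img _ ⟨w, hw, rfl⟩ hfN)
  obtain ⟨Q₀, hQ₀open, hDQ₀, hclQ₀, hQ₀img⟩ := haux m₁ 0 (by omega)
  -- the layer around the exit set
  set ΘE := f ⁻¹' (Q₀ ∪ Nᶜ) ∩ (Metric.cthickening (d₁ / 2) T)ᶜ with hΘEdef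
  have hΘEopen : IsOpen ΘE :=
    ((hQ₀open.union hNclosed.isOpen_compl).preimage hf).inter
      Metric.isClosed_cthickening.isOpen_compl
  have hEΘ : E ⊆ ΘE := by
    intro x hx
    constructor
    · by_cases hfx : f x ∈ N
      · exact Or.inl (hDQ₀ (hfED x hx hfx))
      · exact Or.inr hfx
    · exact hsep x (Or.inl hx)
  obtain ⟨σE, hσEpos, hσE⟩ := hEcomp.exists_cthickening_subset_open hΘEopen hEΘ
  set O := Metric.thickening σE E ∪ Q₀ with hOdef
  have hOopen : IsOpen O := Metric.isOpen_thickening.union hQ₀open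
  have hEO : E ⊆ O := fun x hx => Or.inl (Metric.self_subset_thickening hσEpos _ hx)
  have hclO : closure O ⊆ (Metric.cthickening (d₁ / 2) T)ᶜ := by
    rw [hOdef, closure_union]
    apply Set.union_subset
    · intro z hz
      exact (hσE (closure_minimal (Metric.thickening_subset_cthickening _ _)
        Metric.isClosed_cthickening hz)).2
    · exact hclQ₀
  have hOimg : ∀ z ∈ f '' closure O, z ∈ N → z ∈ O := by
    rintro z ⟨w, hw, rfl⟩ hfN
    rw [hOdef, closure_union] at hw
    rcases hw with hw | hw
    · have hwσ : w ∈ Metric.cthickening σE E :=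
        closure_minimal (Metric.thickening_subset_cthickening _ _)
          Metric.isClosed_cthickening hw
      rcases (hσE hwσ).1 with h | h
      · exact Or.inr h
      · exact absurd hfN h
    · exact Or.inr (hQ₀img _ ⟨w, hw, rfl⟩ hfN)
  -- the pair
  set L := closure (O ∩ interior N) with hLdef
  have hLclosed : IsClosed L := isClosed_closure
  have hLcomp : IsCompact L := hLclosed.isCompact
  have hLN : L ⊆ N := by
    have h1 : L ⊆ closure (interior N) := closure_mono fun x hx => hx.2
    rwa [← hNreg] at h1
  have hLreg : L = closure (interior L) :=
    aux_regular_closure _ (hOopen.inter isOpen_interior)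
  have hONL : O ∩ N ⊆ L := by
    intro z hz
    have hzN : z ∈ closure (interior N) := by rw [← hNreg]; exact hz.2
    exact hOopen.inter_closure ⟨hz.1, hzN⟩
  have hLclO : L ⊆ closure O := closure_mono fun x hx => hx.1
  have hLVS : ∀ z ∈ L, z ∉ Metric.thickening (d₁ / 2) T := fun z hz hmem =>
    (hclO (hLclO hz)) (Metric.thickening_subset_cthickening _ _ hmem)
  have hSL : ∀ p ∈ S, p ∉ L := fun p hp hpL =>
    hLVS p hpL (Metric.self_subset_thickening (by linarith) T (hST hp))
  have hclNL_N : closure (N \ L) ⊆ N := closure_minimal (fun x hx => hx.1) hNclosed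
  have hclNL_NO : closure (N \ L) ⊆ N \ O := by
    apply closure_minimal ?_ (hNclosed.sdiff hOopen)
    intro z hz
    exact ⟨hz.1, fun hzO => hz.2 (hONL ⟨hzO, hz.1⟩)⟩
  refine ⟨N, L, hNcomp, hLcomp, hLN, hNreg, hLreg, ?_, ?_, ?_, ?_, ?_⟩
  · apply Subset.antisymm
    · have h1 := aux_invSet_mono f hclNL_N
      rwa [hInvN] at h1
    · refine hSsubK _ fun p hp => subset_closure ⟨hSN hp, hSL p hp⟩
  · have hVopen : IsOpen (Metric.thickening (d₁ / 2) T ∩ interior N) :=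
      Metric.isOpen_thickening.inter isOpen_interior
    have hVsub : Metric.thickening (d₁ / 2) T ∩ interior N ⊆ closure (N \ L) := by
      intro z hz
      exact subset_closure ⟨interior_subset hz.2, fun hzL => hLVS z hzL hz.1⟩
    intro p hp
    exact interior_maximal hVsub hVopen
      ⟨Metric.self_subset_thickening (by linarith) T (hST hp), hSintN hp⟩
  · intro x hxN hxfx
    rw [mem_nhdsWithin]
    exact ⟨O, hOopen, hEO ⟨hxN, hxfx⟩, fun z hz => hONL ⟨hz.1, hz.2⟩⟩
  · apply Set.eq_empty_iff_forall_notMem.mpr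
    rintro y ⟨⟨w, hwL, rfl⟩, hy⟩
    have hyN : f w ∈ N := (hclNL_NO hy).1
    have hyO : f w ∈ O := hOimg _ ⟨w, hLclO hwL, rfl⟩ hyN
    exact (hclNL_NO hy).2 hyO
  · exact fun x hx => hGU (hNG hx.1)
end

section
/- Let f : ℝ → ℝ be the tent map f(x) = 3x for x ≤ 1/2 and f(x) = 3 − 3x for x ≥ 1/2, and let ε > 0 be sufficiently small. Then the pair (N₀, L₀) with N₀ = [−4ε, 1+4ε] and L₀ = [−4ε, −ε] ∪ [1/3+ε, 2/3−ε] ∪ [1+ε, 1+4ε] is an index pair for the invariant set Inv([−ε, 1+ε]): cl(N₀ \ L₀) is an isolating neighborhood, L₀ is a neighborhood in N₀ of the exit set {x ∈ N₀ : f(x) ∉ int N₀}, and f(L₀) ∩ cl(N₀ \ L₀) = ∅. -/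
open Set

/-- The tent map with slope 3. -/
noncomputable def tent : ℝ → ℝ := fun x => if x ≤ 1 / 2 then 3 * x else 3 - 3 * x

theorem stmt15 :
    ∃ ε₀ > (0 : ℝ), ∀ ε : ℝ, 0 < ε → ε ≤ ε₀ →
      (let N₀ : Set ℝ := Icc (-4 * ε) (1 + 4 * ε)
       let L₀ : Set ℝ := Icc (-4 * ε) (-ε) ∪ Icc (1 / 3 + ε) (2 / 3 - ε) ∪
         Icc (1 + ε) (1 + 4 * ε)
       -- `cl(N₀ \ L₀)` is an isolating neighborhood for `Inv([-ε, 1+ε])`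
       InvSet tent (closure (N₀ \ L₀)) = InvSet tent (Icc (-ε) (1 + ε)) ∧
       InvSet tent (Icc (-ε) (1 + ε)) ⊆ interior (closure (N₀ \ L₀)) ∧
       -- `L₀` is a neighborhood in `N₀` of the exit set
       (∀ x ∈ N₀, tent x ∉ interior N₀ → L₀ ∈ nhdsWithin x N₀) ∧
       -- `tent(L₀) ∩ cl(N₀ \ L₀) = ∅`
       (tent '' L₀) ∩ closure (N₀ \ L₀) = ∅) := by
  refine ⟨1/100, by norm_num, ?_⟩
  intro ε hε hε'
  intro N₀ L₀
  have hNL : N₀ \ L₀ = Ioo (-ε) (1/3+ε) ∪ Ioo (2/3-ε) (1+ε) := by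
    simp only [N₀, L₀]
    ext x
    simp only [mem_diff, mem_Icc, mem_union, mem_Ioo, not_or, not_and, not_le]
    constructor
    · rintro ⟨⟨h1, h2⟩, ⟨h3, h4⟩, h5⟩
      have ha : -ε < x := h3 h1
      have hb : x < 1 + ε := by
        by_contra hb
        push_neg at hb
        exact absurd (h5 hb) (not_lt.mpr h2)
      rcases lt_or_ge x (1/3+ε) with h | h
      · exact Or.inl ⟨ha, h⟩
      · exact Or.inr ⟨h4 h, hb⟩
    · rintro (⟨h1, h2⟩ | ⟨h1, h2⟩)
      · exact ⟨⟨by linarith, by linarith⟩, ⟨fun _ => by linarith,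
          fun h => by linarith⟩, fun h => by linarith⟩
      · exact ⟨⟨by linarith, by linarith⟩, ⟨fun _ => by linarith,
          fun h => by linarith⟩, fun h => by linarith⟩
  have hM : closure (N₀ \ L₀) = Icc (-ε) (1/3+ε) ∪ Icc (2/3-ε) (1+ε) := by
    rw [hNL, closure_union, closure_Ioo (by linarith : (-ε:ℝ) ≠ 1/3+ε),
      closure_Ioo (by linarith : (2/3-ε:ℝ) ≠ 1+ε)]
  have hMI : Icc (-ε) (1/3+ε) ∪ Icc (2/3-ε) (1+ε) ⊆ Icc (-ε) (1+ε) := by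
    rintro x (⟨h1, h2⟩ | ⟨h1, h2⟩) <;> exact ⟨by linarith, by linarith⟩
  have key : ∀ x ∈ Icc (-ε) (1+ε), tent x ∈ Icc (-ε) (1+ε) →
      x ∈ Icc (-ε) (1/3+ε) ∪ Icc (2/3-ε) (1+ε) := by
    rintro x ⟨h1, h2⟩ ⟨h3, h4⟩
    rcases le_or_gt x (1/3+ε) with h | h
    · exact Or.inl ⟨h1, h⟩
    · refine Or.inr ⟨?_, h2⟩
      by_contra hc
      push_neg at hc
      have : 1 + ε < tent x := by
        unfold tent
        split_ifs with hx
        · linarith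
        · push_neg at hx; linarith
      linarith
  have part1 : InvSet tent (closure (N₀ \ L₀)) = InvSet tent (Icc (-ε) (1 + ε)) := by
    rw [hM]
    apply Subset.antisymm
    · rintro p ⟨x, hx, hx0, hxI⟩
      exact ⟨x, hx, hx0, fun i => hMI (hxI i)⟩
    · rintro p ⟨x, hx, hx0, hxI⟩
      refine ⟨x, hx, hx0, fun i => key _ (hxI i) ?_⟩
      rw [hx i]
      exact hxI (i + 1)
  refine ⟨part1, ?_, ?_, ?_⟩
  · -- Inv ⊆ interior
    intro p hp
    have hp' : p ∈ InvSet tent (closure (N₀ \ L₀)) := by rw [part1]; exact hp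
    obtain ⟨y, hy, hy0, hyM⟩ := hp'
    have hpM : p ∈ Icc (-ε) (1/3+ε) ∪ Icc (2/3-ε) (1+ε) := by
      rw [← hy0, ← hM]; exact hyM 0
    have htp : tent p ∈ Icc (-ε) (1+ε) := by
      rw [← hy0, hy 0]
      exact hMI (hM ▸ hyM 1)
    obtain ⟨htp1, htp2⟩ := htp
    have hU : Ioo (-ε) (1/3+ε) ∪ Ioo (2/3-ε) (1+ε) ⊆ interior (closure (N₀ \ L₀)) := by
      rw [hM]
      apply interior_maximal
      · rintro x (h | h)
        · exact Or.inl (Ioo_subset_Icc_self h)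
        · exact Or.inr (Ioo_subset_Icc_self h)
      · exact (isOpen_Ioo).union isOpen_Ioo
    apply hU
    rcases hpM with ⟨h1, h2⟩ | ⟨h1, h2⟩
    · refine Or.inl ⟨?_, ?_⟩
      · rcases h1.lt_or_eq with h | h
        · exact h
        · exfalso
          have : tent p = 3 * p := by unfold tent; rw [if_pos (by linarith)]
          rw [this, ← h] at htp1; linarith
      · rcases h2.lt_or_eq with h | h
        · exact h
        · exfalso
          have : tent p = 3 * p := by unfold tent; rw [if_pos (by linarith)]
          rw [this, h] at htp2; linarith
    · refine Or.inr ⟨?_, ?_⟩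
      · rcases h1.lt_or_eq with h | h
        · exact h
        · exfalso
          have : tent p = 3 - 3 * p := by
            unfold tent; rw [if_neg (not_le.mpr (by linarith))]
          rw [this, ← h] at htp2; linarith
      · rcases h2.lt_or_eq with h | h
        · exact h
        · exfalso
          have : tent p = 3 - 3 * p := by
            unfold tent; rw [if_neg (not_le.mpr (by linarith))]
          rw [this, h] at htp1; linarith
  · -- exit set
    intro x hxN hxf
    have hxN' : x ∈ Icc (-4*ε) (1+4*ε) := hxN
    obtain ⟨hx1, hx2⟩ := hxN'
    have hintN : interior N₀ = Ioo (-4*ε) (1+4*ε) := by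
      simp only [N₀, interior_Icc]
    rw [hintN, mem_Ioo, not_and_or, not_lt, not_lt] at hxf
    have sub1 : Iio (-ε) ∩ N₀ ⊆ L₀ := by
      rintro y ⟨hy1, hy2⟩
      exact Or.inl (Or.inl ⟨hy2.1, le_of_lt hy1⟩)
    have sub2 : Ioo (1/3+ε) (2/3-ε) ∩ N₀ ⊆ L₀ := by
      rintro y ⟨hy1, hy2⟩
      exact Or.inl (Or.inr ⟨hy1.1.le, hy1.2.le⟩)
    have sub3 : Ioi (1+ε) ∩ N₀ ⊆ L₀ := by
      rintro y ⟨hy1, hy2⟩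
      exact Or.inr ⟨le_of_lt hy1, hy2.2⟩
    rcases le_or_gt x (1/2) with hx | hx
    · have ht : tent x = 3 * x := by unfold tent; rw [if_pos hx]
      rw [ht] at hxf
      rcases hxf with h | h
      · exact mem_nhdsWithin.mpr ⟨Iio (-ε), isOpen_Iio, by simp; linarith, sub1⟩
      · exact mem_nhdsWithin.mpr ⟨Ioo (1/3+ε) (2/3-ε), isOpen_Ioo,
          by constructor <;> linarith, sub2⟩
    · have ht : tent x = 3 - 3 * x := by unfold tent; rw [if_neg (not_le.mpr hx)]
      rw [ht] at hxf
      rcases hxf with h | h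
      · exact mem_nhdsWithin.mpr ⟨Ioi (1+ε), isOpen_Ioi, by simp; linarith, sub3⟩
      · exact mem_nhdsWithin.mpr ⟨Ioo (1/3+ε) (2/3-ε), isOpen_Ioo,
          by constructor <;> linarith, sub2⟩
  · -- f(L₀) ∩ cl(N₀\L₀) = ∅
    rw [hM]
    apply eq_empty_iff_forall_notMem.mpr
    rintro y ⟨⟨z, hz, rfl⟩, hyM⟩
    obtain ⟨hy1, hy2⟩ := hMI hyM
    rcases hz with (⟨a, b⟩ | ⟨a, b⟩) | ⟨a, b⟩
    · have ht : tent z = 3 * z := by unfold tent; rw [if_pos (by linarith)]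
      rw [ht] at hy1; linarith
    · have : 1 + ε < tent z := by
        unfold tent
        split_ifs with hzz
        · linarith
        · push_neg at hzz; linarith
      linarith
    · have ht : tent z = 3 - 3 * z := by unfold tent; rw [if_neg (not_le.mpr (by linarith))]
      rw [ht] at hy1; linarith
end
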